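/- arXiv:2210.15345 — 6 statements merged into one kernel-verified Lean document; each statement's English description precedes it below -/
import Mathlib

section
/- For all real y > 2 and x > y², one has e^{-2} · e^{-y} < (1 - y/x)^x ≤ e^{-y}. -/
theorem stmt2 (x y : ℝ) (hy : 2 < y) (hx : y ^ 2 < x) :
    Real.exp (-2) * Real.exp (-y) < (1 - y / x) ^ x ∧
    (1 - y / x) ^ x ≤ Real.exp (-y) := by
  have hy0 : 0 < y := by linarith
  have hyx : y < x := by nlinarith
  have hx0 : 0 < x := by linarith
  have hb : 0 < 1 - y / x := by
    rw [sub_pos]; exact (div_lt_one hx0).mpr hyx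
  have hbinv : (1 - y / x)⁻¹ = x / (x - y) := by
    rw [show (1 : ℝ) - y / x = (x - y) / x by field_simp, inv_div]
  rw [Real.rpow_def_of_pos hb]
  constructor
  · rw [← Real.exp_add, Real.exp_lt_exp]
    have h1 : 1 - (1 - y / x)⁻¹ ≤ Real.log (1 - y / x) :=
      Real.one_sub_inv_le_log_of_pos hb
    rw [hbinv] at h1
    have h2 : (1 - x / (x - y)) * x ≤ Real.log (1 - y / x) * x :=
      mul_le_mul_of_nonneg_right h1 hx0.le
    have hxy0 : x - y ≠ 0 := by intro h; linarith
    have h3 : 1 - x / (x - y) = -y / (x - y) := by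
      field_simp
      ring
    have hxy : 0 < x - y := by linarith
    have h4 : -2 + -y < -y / (x - y) * x := by
      rw [div_mul_eq_mul_div, lt_div_iff₀ hxy]
      nlinarith
    calc -2 + -y < -y / (x - y) * x := h4
      _ = (1 - x / (x - y)) * x := by rw [h3]
      _ ≤ Real.log (1 - y / x) * x := h2
  · rw [Real.exp_le_exp]
    have h1 : Real.log (1 - y / x) ≤ -(y / x) := by
      have := Real.log_le_sub_one_of_pos hb
      linarith
    have h2 : Real.log (1 - y / x) * x ≤ -(y / x) * x :=
      mul_le_mul_of_nonneg_right h1 hx0.le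
    calc Real.log (1 - y / x) * x ≤ -(y / x) * x := h2
      _ = -y := by field_simp
end

section
/- Let d ≥ 2 and a, b > 0, and let Q be the d×d matrix with Q_{11} = a/d + (d−1)b, Q_{1j} = Q_{j1} = b/√d for j ≥ 2, and Q_{ij} = (b/d)δ_{ij} for i, j ≥ 2. Then Q is invertible, (Q^{-1})_{11} = d/a, and (Q^{-1})_{jj} = d²/a + d/b for every j ≥ 2. -/
open Matrix

theorem stmt7 (d : ℕ) [NeZero d] (hd : 2 ≤ d) (a b : ℝ) (ha : 0 < a) (hb : 0 < b)
    (Q : Matrix (Fin d) (Fin d) ℝ)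
    (hQ : Q = Matrix.of fun i j =>
      if i = 0 then
        (if j = 0 then a / d + ((d : ℝ) - 1) * b else b / Real.sqrt d)
      else if j = 0 then b / Real.sqrt d
      else if i = j then b / d else 0) :
    IsUnit Q.det ∧
    Q⁻¹ 0 0 = d / a ∧
    ∀ j : Fin d, j ≠ 0 → Q⁻¹ j j = (d : ℝ) ^ 2 / a + d / b := by
  have hd0 : (0:ℝ) < (d:ℝ) := by positivity
  have hsd : Real.sqrt d * Real.sqrt d = d := Real.mul_self_sqrt (le_of_lt hd0)
  have hsd0 : (0:ℝ) < Real.sqrt d := Real.sqrt_pos.mpr hd0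
  set s := Real.sqrt d with hs
  set R : Matrix (Fin d) (Fin d) ℝ := Matrix.of fun i j =>
      if i = 0 then
        (if j = 0 then d / a else -(d * Real.sqrt d) / a)
      else if j = 0 then -(d * Real.sqrt d) / a
      else (d:ℝ)^2 / a + (if i = j then d / b else 0) with hR
  have hcard : ((Finset.univ \ {(0 : Fin d)}).card : ℝ) = (d:ℝ) - 1 := by
    rw [Finset.card_sdiff_of_subset (by simp)]
    simp only [Finset.card_univ, Fintype.card_fin, Finset.card_singleton]
    have : 1 ≤ d := le_trans (by norm_num) hd
    push_cast [Nat.cast_sub this]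
    ring
  have key : Q * R = 1 := by
    ext i j
    rw [Matrix.mul_apply]
    have hsplit : ∀ f : Fin d → ℝ, ∑ k, f k = (∑ k ∈ Finset.univ \ {0}, f k) + f 0 :=
      fun f => (Finset.sum_eq_sum_sdiff_singleton_add (Finset.mem_univ 0) f)
    rw [hsplit]
    by_cases hi : i = 0 <;> by_cases hj : j = 0
    · subst hi; subst hj
      have hs : ∀ k ∈ Finset.univ \ {(0 : Fin d)},
          Q 0 k * R k 0 = (b / Real.sqrt d) * (-(d * Real.sqrt d) / a) := by
        intro k hk
        have hk0 : k ≠ 0 := by simpa using (Finset.mem_sdiff.mp hk).2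
        simp [hQ, hR, hk0, Ne.symm hk0, s]
      rw [Finset.sum_congr rfl hs, Finset.sum_const, nsmul_eq_mul, hcard,
        Matrix.one_apply_eq]
      have hQ00 : Q 0 0 = a / d + ((d:ℝ) - 1) * b := by simp [hQ]
      have hR00 : R 0 0 = (d:ℝ) / a := by simp [hR]
      rw [hQ00, hR00, ← hsd, Real.sqrt_mul_self hsd0.le]
      field_simp
      ring
    · rw [Matrix.one_apply_ne (by exact fun h => hj (h ▸ hi ▸ rfl))]
      subst hi
      have hs : ∀ k ∈ Finset.univ \ {(0 : Fin d)},
          Q 0 k * R k j = (b / Real.sqrt d) * ((d:ℝ)^2 / a)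
            + (if k = j then (b / Real.sqrt d) * ((d:ℝ) / b) else 0) := by
        intro k hk
        have hk0 : k ≠ 0 := by simpa using (Finset.mem_sdiff.mp hk).2
        by_cases hkj : k = j <;> simp [hQ, hR, hk0, Ne.symm hk0, hkj, hj, s] <;> ring
      rw [Finset.sum_congr rfl hs, Finset.sum_add_distrib, Finset.sum_const, nsmul_eq_mul,
        hcard, Finset.sum_ite_eq' (Finset.univ \ {0}) j, if_pos (by simp [hj])]
      have hQ0 : Q 0 0 = a / d + ((d:ℝ) - 1) * b := by simp [hQ]
      have hR0 : R 0 j = -(d * Real.sqrt d) / a := by simp [hR, hj]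
      rw [hQ0, hR0, ← hsd, Real.sqrt_mul_self hsd0.le]
      field_simp
      ring
    · subst hj
      rw [Matrix.one_apply_ne hi]
      have hs : ∀ k ∈ Finset.univ \ {(0 : Fin d)},
          Q i k * R k 0 = if i = k then (b / d) * (-(d * Real.sqrt d) / a) else 0 := by
        intro k hk
        have hk0 : k ≠ 0 := by simpa using (Finset.mem_sdiff.mp hk).2
        by_cases hik : i = k <;> simp [hQ, hR, hk0, hi, hik]
      rw [Finset.sum_congr rfl hs,
        Finset.sum_ite_eq (Finset.univ \ {0}) i, if_pos (by simp [hi])]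
      have hQ0 : Q i 0 = b / Real.sqrt d := by simp [hQ, hi, s]
      have hR0 : R 0 0 = (d:ℝ) / a := by simp [hR]
      rw [hQ0, hR0, ← hsd, Real.sqrt_mul_self hsd0.le]
      field_simp
      ring
    · rw [Matrix.one_apply]
      have hs : ∀ k ∈ Finset.univ \ {(0 : Fin d)},
          Q i k * R k j = if i = k then
            (b / d) * ((d:ℝ)^2 / a + (if k = j then (d:ℝ) / b else 0)) else 0 := by
        intro k hk
        have hk0 : k ≠ 0 := by simpa using (Finset.mem_sdiff.mp hk).2
        by_cases hik : i = k <;> simp [hQ, hR, hk0, hi, hik, hj]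
      rw [Finset.sum_congr rfl hs,
        Finset.sum_ite_eq (Finset.univ \ {0}) i, if_pos (by simp [hi])]
      have hQ0 : Q i 0 = b / Real.sqrt d := by simp [hQ, hi, s]
      have hR0 : R 0 j = -(d * Real.sqrt d) / a := by simp [hR, hj]
      rw [hQ0, hR0, ← hsd, Real.sqrt_mul_self hsd0.le]
      by_cases hij : i = j <;> simp [hij] <;> field_simp <;> ring
  have hinv : Q⁻¹ = R := Matrix.inv_eq_right_inv key
  refine ⟨Matrix.isUnit_det_of_right_inverse key, ?_, ?_⟩
  · rw [hinv]; simp [hR]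
  · intro j hj
    rw [hinv]
    simp [hR, hj]
end

section
/- Let d ≥ 2 and a, b > 0 with a + (d−1)b = 1, and let Q be the d×d matrix with Q_{11} = a/d + (d−1)b, Q_{1j} = Q_{j1} = b/√d for j ≥ 2, and Q_{ij} = (b/d)δ_{ij} for i, j ≥ 2. Then the eigenvalues of Q are λ = b/d with multiplicity d−2 together with the two roots of λ² − (1/d + (d²−2d+2)b/d)λ + (b − (d−1)b²)/d² = 0. -/
open Matrix Polynomial

variable {R : Type*} [CommRing R]

lemma det_T (n : ℕ) (β p : R) :
    Matrix.det (Matrix.of fun i j : Fin (n+1) =>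
      if i = 0 then β else if (j:ℕ)+1 = (i:ℕ) then p else 0)
    = (-1)^n * β * p^n := by
  rw [Matrix.det_succ_column _ (Fin.last n)]
  rw [Finset.sum_eq_single 0]
  · have h1 : ((Matrix.of fun i j : Fin (n+1) =>
        if i = 0 then β else if (j:ℕ)+1 = (i:ℕ) then p else 0).submatrix
        (Fin.succAbove 0) (Fin.succAbove (Fin.last n)))
        = Matrix.diagonal (fun _ : Fin n => p) := by
      ext r c
      simp only [Matrix.submatrix_apply, Matrix.of_apply, Fin.succAbove_zero,
        Fin.succAbove_last, Matrix.diagonal_apply]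
      rw [if_neg (Fin.succ_ne_zero r)]
      simp [Fin.ext_iff, eq_comm]
    rw [h1, Matrix.det_diagonal]
    simp [Matrix.of_apply, Fin.last, mul_comm]
  · intro i _ hi
    have : ¬ n + 1 = (i : ℕ) := by
      have := i.isLt; omega
    simp [Matrix.of_apply, hi, this]
  · simp



lemma det_arrow (n : ℕ) (α β γ p : R) :
    Matrix.det (Matrix.of fun i j : Fin (n+1) =>
      if i = 0 then (if j = 0 then α else β)
      else if j = 0 then γ else if i = j then p else 0)
    = α * p^n - n * β * γ * p^(n-1) := by
  induction n with
  | zero => simp [Matrix.det_fin_one]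
  | succ n ih =>
    have hlast0 : (Fin.last (n+1) : Fin (n+2)) ≠ 0 := by
      simp [Fin.ext_iff]
    rw [Matrix.det_succ_row _ (Fin.last (n+1)), Fin.sum_univ_succ,
      Finset.sum_eq_single (Fin.last n)]
    · have hminor0 : ((Matrix.of fun i j : Fin (n+2) =>
          if i = 0 then (if j = 0 then α else β)
          else if j = 0 then γ else if i = j then p else 0).submatrix
          (Fin.succAbove (Fin.last (n+1))) (Fin.succAbove 0))
          = Matrix.of (fun i j : Fin (n+1) =>
            if i = 0 then β else if (j:ℕ)+1 = (i:ℕ) then p else 0) := by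
        ext r c
        simp only [Matrix.submatrix_apply, Matrix.of_apply, Fin.succAbove_zero,
          Fin.succAbove_last]
        rw [if_neg (Fin.succ_ne_zero c)]
        by_cases hr : r = 0
        · subst hr; simp
        · have hr' : ¬ ((r:ℕ) = 0) := fun h => hr (Fin.ext (by rw [h, Fin.val_zero]))
          rw [if_neg (by rw [Fin.castSucc_eq_zero_iff]; exact hr), if_neg (Fin.succ_ne_zero c),
            if_neg hr]
          simp [Fin.ext_iff, eq_comm]
      have hminor1 : ((Matrix.of fun i j : Fin (n+2) =>
          if i = 0 then (if j = 0 then α else β)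
          else if j = 0 then γ else if i = j then p else 0).submatrix
          (Fin.succAbove (Fin.last (n+1))) (Fin.succAbove (Fin.succ (Fin.last n))))
          = Matrix.of (fun i j : Fin (n+1) =>
            if i = 0 then (if j = 0 then α else β)
            else if j = 0 then γ else if i = j then p else 0) := by
        have hsl : (Fin.succ (Fin.last n)) = Fin.last (n+1) := by
          simp [Fin.ext_iff]
        ext r c
        simp only [Matrix.submatrix_apply, Matrix.of_apply, hsl, Fin.succAbove_last,
          Fin.castSucc_eq_zero_iff]
        congr 1
        simp
      have hA1 : (Matrix.of fun i j : Fin (n+2) =>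
          if i = 0 then (if j = 0 then α else β)
          else if j = 0 then γ else if i = j then p else 0) (Fin.last (n+1)) 0 = γ := by
        simp [hlast0]
      have hA2 : (Matrix.of fun i j : Fin (n+2) =>
          if i = 0 then (if j = 0 then α else β)
          else if j = 0 then γ else if i = j then p else 0) (Fin.last (n+1))
          (Fin.succ (Fin.last n)) = p := by
        have hsl : (Fin.succ (Fin.last n)) = Fin.last (n+1) := by
          simp [Fin.ext_iff]
        simp [hsl, hlast0]
      rw [hminor0, hminor1, det_T, ih, hA1, hA2]
      simp only [Fin.val_last, Fin.val_zero, Fin.val_succ, Nat.add_zero, add_zero,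
        Nat.add_sub_cancel, Nat.cast_add, Nat.cast_one]
      have hS : ((-1:R))^(n+1) * (-1)^n = -1 := by
        rw [← pow_add, show n+1+n = 2*n+1 from by ring, pow_succ, pow_mul,
          neg_one_sq, one_pow, one_mul]
      have h2 : ((-1:R))^(n+1+(n+1)) = 1 := by
        rw [show n+1+(n+1) = 2*(n+1) from by ring, pow_mul, neg_one_sq, one_pow]
      have hp : (n:R) * (p * p^(n-1)) = (n:R) * p^n := by
        rcases n with _|m
        · simp
        · simp [pow_succ, mul_comm]
      linear_combination (γ*β*p^n) * hS + (p*α*p^n - (n:R)*β*γ*(p*p^(n-1))) * h2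
        + (-(β*γ)) * hp
    · intro j _ hj
      have h0 : (Matrix.of fun i j : Fin (n+2) =>
          if i = 0 then (if j = 0 then α else β)
          else if j = 0 then γ else if i = j then p else 0) (Fin.last (n+1))
          (Fin.succ j) = 0 := by
        have h1 : (Fin.last (n+1) : Fin (n+2)) ≠ Fin.succ j := by
          intro h
          apply hj
          have := j.isLt
          simp only [Fin.ext_iff, Fin.val_last, Fin.val_succ] at h ⊢
          omega
        simp only [Matrix.of_apply]
        rw [if_neg hlast0, if_neg (Fin.succ_ne_zero j), if_neg h1]
      rw [h0]; ring
    · intro h; exact absurd (Finset.mem_univ _) h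

lemma det_arrow' (m : ℕ) (α β γ p : R) :
    Matrix.det (Matrix.of fun i j : Fin (m+2) =>
      if i = 0 then (if j = 0 then α else β)
      else if j = 0 then γ else if i = j then p else 0)
    = α * p^(m+1) - ((m+1 : ℕ) : R) * β * γ * p^m :=
  det_arrow (m+1) α β γ p

/-- The characteristic polynomial of `Q` factors as `(X - b/d)^(d-2)` times the quadratic
`X² − (1/d + (d²−2d+2)b/d)·X + (b − (d−1)b²)/d²`, i.e. the eigenvalues of `Q` are `b/d`
with multiplicity `d − 2` together with the two roots of that quadratic. -/
theorem stmt8 (d : ℕ) [NeZero d] (hd : 2 ≤ d) (a b : ℝ) (ha : 0 < a) (hb : 0 < b)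
    (hab : a + ((d : ℝ) - 1) * b = 1)
    (Q : Matrix (Fin d) (Fin d) ℝ)
    (hQ : Q = Matrix.of fun i j =>
      if i = 0 then
        (if j = 0 then a / d + ((d : ℝ) - 1) * b else b / Real.sqrt d)
      else if j = 0 then b / Real.sqrt d
      else if i = j then b / d else 0) :
    Q.charpoly =
      (X - C (b / d)) ^ (d - 2) *
        (X ^ 2 - C (1 / d + ((d : ℝ) ^ 2 - 2 * d + 2) * b / d) * X
          + C ((b - ((d : ℝ) - 1) * b ^ 2) / (d : ℝ) ^ 2)) := by
  subst hQ
  obtain ⟨m, rfl⟩ : ∃ m, d = m + 2 := ⟨d - 2, by omega⟩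
  set D : ℝ := ((m + 2 : ℕ) : ℝ) with hDdef
  have hD0 : 0 < D := by positivity
  have hD : D ≠ 0 := ne_of_gt hD0
  set q00 : ℝ := a / D + (D - 1) * b with hq00
  set pp : ℝ := b / D with hpp
  set c : ℝ := b / Real.sqrt D with hc
  rw [Matrix.charpoly]
  have hch : charmatrix (Matrix.of fun i j : Fin (m+2) =>
      if i = 0 then (if j = 0 then q00 else c)
      else if j = 0 then c
      else if i = j then pp else 0)
    = Matrix.of (fun i j : Fin (m+2) =>
      if i = 0 then (if j = 0 then X - C q00 else -C c)
      else if j = 0 then -C c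
      else if i = j then X - C pp else 0) := by
    ext i j
    by_cases hij : i = j
    · subst hij
      rw [charmatrix_apply_eq]
      by_cases hi : i = 0 <;> simp [hi]
    · rw [charmatrix_apply_ne _ _ _ hij]
      by_cases hi : i = 0 <;> by_cases hj : j = 0 <;>
        simp_all [Ne.symm hij]
  rw [hch, det_arrow']
  have hc2 : (-C c) * (-C c) = C (b^2 / D) := by
    rw [neg_mul_neg, ← C_mul]
    congr 1
    rw [hc, div_mul_div_comm, Real.mul_self_sqrt (le_of_lt hD0)]
    ring
  have hnat : ((m + 1 : ℕ) : ℝ[X]) = C ((m : ℝ) + 1) := by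
    rw [← map_natCast (C : ℝ →+* ℝ[X])]
    push_cast
    ring_nf
  have hm1 : (m : ℝ) + 1 = D - 1 := by rw [hDdef]; push_cast; ring
  have ha' : a = 1 - (D - 1) * b := by rw [hDdef] at *; linarith [hab]
  have hs : 1 / D + (D ^ 2 - 2 * D + 2) * b / D = q00 + pp := by
    rw [hq00, hpp, ha']
    field_simp
    ring
  have ht : (b - (D - 1) * b ^ 2) / D ^ 2 = q00 * pp - ((m : ℝ) + 1) * (b^2 / D) := by
    rw [hq00, hpp, hm1, ha']
    field_simp
    ring
  have h22 : m + 2 - 2 = m := by omega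
  rw [h22, hs, ht]
  rw [show ((m + 1 : ℕ) : ℝ[X]) * (-C c) * (-C c) * (X - C pp) ^ m
      = ((m + 1 : ℕ) : ℝ[X]) * ((-C c) * (-C c)) * (X - C pp) ^ m by ring,
    hc2, hnat]
  simp only [C_add, C_mul, C_sub]
  ring
end

section
/- Let d ≥ 2, a > 0, b₂,…,b_d > 0, and let Q be the d×d matrix with Q_{11} = a/d + Σ_{i=2}^d b_i, Q_{1j} = Q_{j1} = b_j/√d for j ≥ 2, Q_{ij} = (b_i/d)δ_{ij} for i,j ≥ 2. Then (Q^{-1})_{11} = d/a and (Q^{-1})_{ii} = d²/a + d/b_i for i ≥ 2. Consequently, subject to the constraint Σ_{i=2}^d b_i = 1 − a with a fixed, max_{i≥2}(Q^{-1})_{ii} is minimized when b₂ = b₃ = ⋯ = b_d = (1−a)/(d−1). -/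
open Matrix

/-- The covariance matrix induced by weight `a` on the arm `(1/√d)e₁` and weights
`b i` on the arms `e₁ + (1/√d)eᵢ`, `i ≠ 1`. -/
noncomputable def covMat (d : ℕ) [NeZero d] (a : ℝ) (b : Fin d → ℝ) :
    Matrix (Fin d) (Fin d) ℝ :=
  Matrix.of fun i j =>
    if i = 0 then
      (if j = 0 then a / d + ∑ k ∈ Finset.univ.erase (0 : Fin d), b k
       else b j / Real.sqrt d)
    else if j = 0 then b i / Real.sqrt d
    else if i = j then b i / d else 0

lemma covMat_inv (d : ℕ) [NeZero d] (hd : 2 ≤ d) (a : ℝ) (ha : 0 < a)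
    (b : Fin d → ℝ) (hb : ∀ i : Fin d, i ≠ 0 → 0 < b i) :
    (covMat d a b)⁻¹ = Matrix.of (fun i j =>
      if i = 0 then (if j = 0 then (d : ℝ) / a else -((d : ℝ) * Real.sqrt d) / a)
      else if j = 0 then -((d : ℝ) * Real.sqrt d) / a
      else (d : ℝ)^2/a + if i = j then (d : ℝ) / b i else 0) := by
  have hd0 : (0:ℝ) < d := by positivity
  have hsd : Real.sqrt d * Real.sqrt d = d := Real.mul_self_sqrt (le_of_lt hd0)
  have hsd0 : (0:ℝ) < Real.sqrt d := Real.sqrt_pos.2 hd0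
  apply inv_eq_right_inv
  ext i k
  rw [Matrix.mul_apply, ← Finset.add_sum_erase _ _ (Finset.mem_univ 0)]
  by_cases hi : i = 0
  · by_cases hk : k = 0
    · subst hi; subst hk
      rw [Finset.sum_congr rfl (fun j hj => show covMat d a b 0 j *
            Matrix.of (fun i j =>
              if i = 0 then (if j = 0 then (d : ℝ) / a else -((d : ℝ) * Real.sqrt d) / a)
              else if j = 0 then -((d : ℝ) * Real.sqrt d) / a
              else (d : ℝ)^2/a + if i = j then (d : ℝ) / b i else 0) j 0
          = b j * (-((d:ℝ)/a)) from by
        have hj0 : j ≠ 0 := (Finset.mem_erase.1 hj).1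
        simp only [covMat, Matrix.of_apply, if_pos rfl, eq_self_iff_true, if_true, if_neg hj0]
        generalize hgs : Real.sqrt (d : ℝ) = s at hsd hsd0 ⊢
        rw [← hsd]
        field_simp)]
      rw [← Finset.sum_mul]
      simp only [covMat, Matrix.of_apply, if_pos rfl, eq_self_iff_true, if_true, Matrix.one_apply_eq]
      field_simp; ring
    · subst hi
      rw [Finset.sum_congr rfl (fun j hj => show covMat d a b 0 j *
            Matrix.of (fun i j =>
              if i = 0 then (if j = 0 then (d : ℝ) / a else -((d : ℝ) * Real.sqrt d) / a)
              else if j = 0 then -((d : ℝ) * Real.sqrt d) / a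
              else (d : ℝ)^2/a + if i = j then (d : ℝ) / b i else 0) j k
          = b j * ((d : ℝ) * Real.sqrt d/a) + (if j = k then Real.sqrt d else 0) from by
        have hj0 : j ≠ 0 := (Finset.mem_erase.1 hj).1
        simp only [covMat, Matrix.of_apply, if_pos rfl, eq_self_iff_true, if_true, if_neg hj0, if_neg hk]
        rcases eq_or_ne j k with h | h
        · simp only [if_pos h]
          have hbj := (hb j hj0).ne'
          generalize hgs : Real.sqrt (d : ℝ) = s at hsd hsd0 ⊢
          rw [← hsd]
          field_simp
        · simp only [if_neg h, add_zero]
          generalize hgs : Real.sqrt (d : ℝ) = s at hsd hsd0 ⊢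
          rw [← hsd]
          field_simp)]
      rw [Finset.sum_add_distrib, ← Finset.sum_mul, Finset.sum_ite_eq' _ k]
      have hkmem : k ∈ Finset.univ.erase (0 : Fin d) :=
        Finset.mem_erase.2 ⟨hk, Finset.mem_univ k⟩
      rw [if_pos hkmem]
      simp only [covMat, Matrix.of_apply, if_pos rfl, eq_self_iff_true, if_true, if_neg hk, Matrix.one_apply,
        if_neg (Ne.symm hk)]
      generalize hgs : Real.sqrt (d : ℝ) = s at hsd hsd0 ⊢
      rw [← hsd]
      field_simp; ring
  · by_cases hk : k = 0
    · subst hk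
      rw [Finset.sum_congr rfl (fun j hj => show covMat d a b i j *
            Matrix.of (fun i j =>
              if i = 0 then (if j = 0 then (d : ℝ) / a else -((d : ℝ) * Real.sqrt d) / a)
              else if j = 0 then -((d : ℝ) * Real.sqrt d) / a
              else (d : ℝ)^2/a + if i = j then (d : ℝ) / b i else 0) j 0
          = (if i = j then b i * (-(Real.sqrt d)/a) else 0) from by
        have hj0 : j ≠ 0 := (Finset.mem_erase.1 hj).1
        simp only [covMat, Matrix.of_apply, if_neg hi, if_neg hj0, if_pos rfl, eq_self_iff_true, if_true]
        rcases eq_or_ne i j with h | h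
        · simp only [if_pos h]; field_simp
        · simp only [if_neg h, zero_mul])]
      have himem : i ∈ Finset.univ.erase (0 : Fin d) :=
        Finset.mem_erase.2 ⟨hi, Finset.mem_univ i⟩
      rw [Finset.sum_ite_eq _ i, if_pos himem]
      simp only [covMat, Matrix.of_apply, if_neg hi, if_pos rfl, eq_self_iff_true, if_true, Matrix.one_apply, if_neg hi]
      generalize hgs : Real.sqrt (d : ℝ) = s at hsd hsd0 ⊢
      rw [← hsd]
      field_simp; ring
    · rw [Finset.sum_congr rfl (fun j hj => show covMat d a b i j *
            Matrix.of (fun i j =>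
              if i = 0 then (if j = 0 then (d : ℝ) / a else -((d : ℝ) * Real.sqrt d) / a)
              else if j = 0 then -((d : ℝ) * Real.sqrt d) / a
              else (d : ℝ)^2/a + if i = j then (d : ℝ) / b i else 0) j k
          = (if i = j then (b i * ((d:ℝ)/a) + if j = k then (1:ℝ) else 0) else 0) from by
        have hj0 : j ≠ 0 := (Finset.mem_erase.1 hj).1
        simp only [covMat, Matrix.of_apply, if_neg hi, if_neg hj0, if_neg hk]
        rcases eq_or_ne i j with h | h
        · subst h
          simp only [if_pos rfl, eq_self_iff_true, if_true]
          have hbi := (hb i hi).ne'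
          rcases eq_or_ne i k with h2 | h2
          · simp only [if_pos h2]
            field_simp
          · simp only [if_neg h2, add_zero]
            field_simp
        · simp only [if_neg h, zero_mul])]
      have himem : i ∈ Finset.univ.erase (0 : Fin d) :=
        Finset.mem_erase.2 ⟨hi, Finset.mem_univ i⟩
      rw [Finset.sum_ite_eq _ i, if_pos himem]
      simp only [covMat, Matrix.of_apply, if_neg hi, if_neg hk, if_pos rfl, eq_self_iff_true, if_true, Matrix.one_apply]
      rcases eq_or_ne i k with h2 | h2
      · simp only [if_pos h2]
        generalize hgs : Real.sqrt (d : ℝ) = s at hsd hsd0 ⊢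
        rw [← hsd]
        field_simp; ring
      · simp only [if_neg h2, add_zero]
        generalize hgs : Real.sqrt (d : ℝ) = s at hsd hsd0 ⊢
        rw [← hsd]
        field_simp; ring

/-- Diagonal entries of the inverse, and the consequence: subject to
`∑_{i≠1} b i = 1 − a`, the maximum over `i ≠ 1` of `(Q⁻¹)_{ii}` is minimized by the
equal-weight choice `b i = (1−a)/(d−1)`. -/
theorem stmt12 (d : ℕ) [NeZero d] (hd : 2 ≤ d) (a : ℝ) (ha : 0 < a) (ha1 : a < 1) :
    (∀ b : Fin d → ℝ, (∀ i : Fin d, i ≠ 0 → 0 < b i) →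
      ((covMat d a b)⁻¹ 0 0 = d / a ∧
        ∀ i : Fin d, i ≠ 0 → (covMat d a b)⁻¹ i i = (d : ℝ) ^ 2 / a + d / b i)) ∧
    (∀ b : Fin d → ℝ, (∀ i : Fin d, i ≠ 0 → 0 < b i) →
      (∑ i ∈ Finset.univ.erase (0 : Fin d), b i = 1 - a) →
      (⨆ i : {i : Fin d // i ≠ 0},
          (covMat d a (fun _ => (1 - a) / ((d : ℝ) - 1)))⁻¹ i.1 i.1) ≤
        ⨆ i : {i : Fin d // i ≠ 0}, (covMat d a b)⁻¹ i.1 i.1) := by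
  have part1 : ∀ b : Fin d → ℝ, (∀ i : Fin d, i ≠ 0 → 0 < b i) →
      ((covMat d a b)⁻¹ 0 0 = d / a ∧
        ∀ i : Fin d, i ≠ 0 → (covMat d a b)⁻¹ i i = (d : ℝ) ^ 2 / a + d / b i) := by
    intro b hb
    rw [covMat_inv d hd a ha b hb]
    exact ⟨by simp, fun i hi => by simp [hi]⟩
  refine ⟨part1, ?_⟩
  intro b hb hsum
  have hd1 : (0:ℝ) < (d:ℝ) - 1 := by
    have : (2:ℝ) ≤ (d:ℝ) := by exact_mod_cast hd
    linarith
  set c : ℝ := (1 - a) / ((d : ℝ) - 1) with hcdef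
  have hc : 0 < c := div_pos (by linarith) hd1
  have hne : Nonempty {i : Fin d // i ≠ 0} :=
    ⟨⟨⟨1, by omega⟩, by simp [Fin.ext_iff]⟩⟩
  have hcard : (Finset.univ.erase (0 : Fin d)).card = d - 1 := by
    rw [Finset.card_erase_of_mem (Finset.mem_univ _), Finset.card_univ, Fintype.card_fin]
  have hex : ∃ i ∈ Finset.univ.erase (0 : Fin d), b i ≤ c := by
    by_contra h
    push_neg at h
    have hlt : ∑ i ∈ Finset.univ.erase (0 : Fin d), c
        < ∑ i ∈ Finset.univ.erase (0 : Fin d), b i := by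
      apply Finset.sum_lt_sum_of_nonempty
      · exact ⟨⟨1, by omega⟩, Finset.mem_erase.2 ⟨by simp [Fin.ext_iff], Finset.mem_univ _⟩⟩
      · exact h
    rw [Finset.sum_const, hcard, hsum, nsmul_eq_mul] at hlt
    have hcast : ((d - 1 : ℕ) : ℝ) = (d : ℝ) - 1 := by
      rw [Nat.cast_sub (by omega)]; norm_num
    rw [hcast, hcdef, mul_div_cancel₀ _ (ne_of_gt hd1)] at hlt
    exact lt_irrefl _ hlt
  obtain ⟨i0, hi0mem, hi0⟩ := hex
  have hi0ne : i0 ≠ 0 := (Finset.mem_erase.1 hi0mem).1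
  apply ciSup_le
  rintro ⟨i, hi⟩
  have h1 : (covMat d a (fun _ => c))⁻¹ i i = (d : ℝ) ^ 2 / a + d / c :=
    (part1 _ (fun _ _ => hc)).2 i hi
  have h2 : (covMat d a b)⁻¹ i0 i0 = (d : ℝ) ^ 2 / a + d / b i0 :=
    (part1 b hb).2 i0 hi0ne
  calc (covMat d a (fun _ => c))⁻¹ i i = (d : ℝ) ^ 2 / a + d / c := h1
    _ ≤ (d : ℝ) ^ 2 / a + d / b i0 := by
        gcongr
        exact hb i0 hi0ne
    _ = (covMat d a b)⁻¹ i0 i0 := h2.symm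
    _ ≤ ⨆ i : {i : Fin d // i ≠ 0}, (covMat d a b)⁻¹ i.1 i.1 :=
        le_ciSup (f := fun i : {i : Fin d // i ≠ 0} => (covMat d a b)⁻¹ i.1 i.1)
          (Set.Finite.bddAbove (Set.finite_range _)) ⟨i0, hi0ne⟩
end

section
/- Let X₁,…,X_n be random vectors in R^d, i.i.d., drawn from a distribution μ on a finite set A ⊂ R^d with covariance-of-second-moment matrix Q = E[XXᵀ] invertible. Fix θ*, θ₀ ∈ R^d, let η be conditionally mean-zero noise with conditional variance at most σ², independent across samples, and let y = ⟨X, θ*⟩ + η. Define θ̃ = θ₀ + Q^{-1}X(y − ⟨X, θ₀⟩). Then E[θ̃] = θ* and Cov(θ̃) ⪯ (R₀² + σ²)·Q^{-1}, where R₀ = max_{a∈A} |⟨a, θ* − θ₀⟩|. -/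
open Matrix MeasureTheory ProbabilityTheory

section Aux

variable {Ω : Type*} [MeasureSpace Ω] [IsProbabilityMeasure (ℙ : Measure Ω)]
  {d : ℕ} {X : Ω → Fin d → ℝ} {η : Ω → ℝ}
  {A : Finset (Fin d → ℝ)}

lemma aux_bound (hAne : A.Nonempty) (hXA : ∀ ω, X ω ∈ A) (φ : (Fin d → ℝ) → ℝ) (ω : Ω) :
    |φ (X ω)| ≤ A.sup' hAne (fun a => |φ a|) :=
  Finset.le_sup' (fun a => |φ a|) (hXA ω)

lemma aux_int_phi (hX : Measurable X) (hAne : A.Nonempty) (hXA : ∀ ω, X ω ∈ A)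
    (φ : (Fin d → ℝ) → ℝ) (hφ : Measurable φ) :
    Integrable (fun ω => φ (X ω)) := by
  refine MemLp.integrable le_rfl (MemLp.of_bound ((hφ.comp hX).aestronglyMeasurable)
    (A.sup' hAne (fun a => |φ a|)) ?_)
  filter_upwards with ω
  simpa [Real.norm_eq_abs] using aux_bound hAne hXA φ ω

lemma aux_int_phi_eta (hX : Measurable X) (hAne : A.Nonempty) (hXA : ∀ ω, X ω ∈ A)
    (hη2 : MemLp η 2 ℙ) (φ : (Fin d → ℝ) → ℝ) (hφ : Measurable φ) :
    Integrable (fun ω => φ (X ω) * η ω) := by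
  refine Integrable.bdd_mul (c := A.sup' hAne (fun a => |φ a|)) (hη2.integrable one_le_two) ((hφ.comp hX).aestronglyMeasurable) ?_
  exact Filter.Eventually.of_forall fun ω => by
    simpa [Real.norm_eq_abs] using aux_bound hAne hXA φ ω

lemma aux_int_phi_etasq (hX : Measurable X) (hAne : A.Nonempty) (hXA : ∀ ω, X ω ∈ A)
    (hη2 : MemLp η 2 ℙ) (φ : (Fin d → ℝ) → ℝ) (hφ : Measurable φ) :
    Integrable (fun ω => φ (X ω) * η ω ^ 2) := by
  refine Integrable.bdd_mul (c := A.sup' hAne (fun a => |φ a|)) hη2.integrable_sq ((hφ.comp hX).aestronglyMeasurable) ?_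
  exact Filter.Eventually.of_forall fun ω => by
    simpa [Real.norm_eq_abs] using aux_bound hAne hXA φ ω

lemma aux_sm (hX : Measurable X) (φ : (Fin d → ℝ) → ℝ) (hφ : Measurable φ) :
    StronglyMeasurable[MeasurableSpace.comap X inferInstance] (fun ω => φ (X ω)) := by
  exact Measurable.stronglyMeasurable (hφ.comp (measurable_iff_comap_le.mpr le_rfl))

lemma aux_int_mul_eta_eq_zero (hX : Measurable X) (hAne : A.Nonempty) (hXA : ∀ ω, X ω ∈ A)
    (hη2 : MemLp η 2 ℙ)
    (hcond0 : MeasureTheory.condExp (MeasurableSpace.comap X inferInstance) ℙ η =ᵐ[ℙ] 0)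
    (φ : (Fin d → ℝ) → ℝ) (hφ : Measurable φ) :
    ∫ ω, φ (X ω) * η ω = 0 := by
  set m := MeasurableSpace.comap X inferInstance with hm_def
  have hm : m ≤ _ := hX.comap_le
  have hint : Integrable (fun ω => φ (X ω) * η ω) := aux_int_phi_eta hX hAne hXA hη2 φ hφ
  have hηint : Integrable η := hη2.integrable one_le_two
  have h1 : ∫ ω, φ (X ω) * η ω = ∫ ω, (ℙ[(fun ω => φ (X ω)) * η|m]) ω := by
    rw [integral_condExp hm]; rfl
  rw [h1]
  have h2 : ℙ[(fun ω => φ (X ω)) * η|m] =ᵐ[ℙ] (fun ω => φ (X ω)) * MeasureTheory.condExp m ℙ η :=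
    condExp_mul_of_stronglyMeasurable_left (aux_sm hX φ hφ) hint hηint
  have h3 : ((fun ω => φ (X ω)) * MeasureTheory.condExp m ℙ η) =ᵐ[ℙ] (0 : Ω → ℝ) := by
    filter_upwards [hcond0] with ω hω
    show φ (X ω) * (MeasureTheory.condExp m ℙ η) ω = (0 : Ω → ℝ) ω
    simp only [Pi.zero_apply] at hω ⊢
    rw [hω, mul_zero]
  rw [integral_congr_ae (h2.trans h3)]; simp

lemma aux_int_sq_etasq_le (hX : Measurable X) (hAne : A.Nonempty) (hXA : ∀ ω, X ω ∈ A)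
    (hη2 : MemLp η 2 ℙ) {σ : ℝ}
    (hcondvar : ∀ᵐ ω ∂ℙ,
      MeasureTheory.condExp (MeasurableSpace.comap X inferInstance) ℙ (fun ω' => η ω' ^ 2) ω ≤ σ ^ 2)
    (φ : (Fin d → ℝ) → ℝ) (hφ : Measurable φ) :
    ∫ ω, φ (X ω) ^ 2 * η ω ^ 2 ≤ σ ^ 2 * ∫ ω, φ (X ω) ^ 2 := by
  set m := MeasurableSpace.comap X inferInstance with hm_def
  have hm : m ≤ _ := hX.comap_le
  have hφ2 : Measurable (fun x : Fin d → ℝ => φ x ^ 2) := hφ.pow_const 2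
  have hint : Integrable (fun ω => φ (X ω) ^ 2 * η ω ^ 2) := aux_int_phi_etasq hX hAne hXA hη2 _ hφ2
  have hη2int : Integrable (fun ω => η ω ^ 2) := hη2.integrable_sq
  have h1 : ∫ ω, φ (X ω) ^ 2 * η ω ^ 2 = ∫ ω, (ℙ[(fun ω => φ (X ω) ^ 2) * (fun ω => η ω ^ 2)|m]) ω := by
    rw [integral_condExp hm]
    rfl
  have h2 : ℙ[(fun ω => φ (X ω) ^ 2) * (fun ω => η ω ^ 2)|m]
      =ᵐ[ℙ] (fun ω => φ (X ω) ^ 2) * ℙ[(fun ω => η ω ^ 2)|m] :=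
    condExp_mul_of_stronglyMeasurable_left (aux_sm hX _ hφ2) hint hη2int
  rw [h1, integral_congr_ae h2]
  have hintl : Integrable ((fun ω => φ (X ω) ^ 2) * ℙ[(fun ω => η ω ^ 2)|m]) := by
    refine Integrable.bdd_mul (c := A.sup' hAne (fun a => |φ a ^ 2|)) integrable_condExp ((hφ2.comp hX).aestronglyMeasurable) ?_
    exact Filter.Eventually.of_forall fun ω => by
      rw [Real.norm_eq_abs]; exact aux_bound hAne hXA (fun x => φ x ^ 2) ω
  have hintr : Integrable (fun ω => σ ^ 2 * φ (X ω) ^ 2) :=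
    (aux_int_phi hX hAne hXA _ hφ2).const_mul _
  rw [← integral_const_mul]
  refine integral_mono_ae hintl hintr ?_
  filter_upwards [hcondvar] with ω hω
  have h0 : (0:ℝ) ≤ φ (X ω) ^ 2 := sq_nonneg _
  calc φ (X ω) ^ 2 * (ℙ[(fun ω => η ω ^ 2)|m]) ω ≤ φ (X ω) ^ 2 * σ ^ 2 :=
        mul_le_mul_of_nonneg_left hω h0
    _ = σ ^ 2 * φ (X ω) ^ 2 := mul_comm _ _

end Aux

section Aux2

variable {Ω : Type*} [MeasureSpace Ω] [IsProbabilityMeasure (ℙ : Measure Ω)]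
  {d : ℕ} {X : Ω → Fin d → ℝ} {A : Finset (Fin d → ℝ)}

lemma aux_meas_dot (b : Fin d → ℝ) : Measurable fun x : Fin d → ℝ => b ⬝ᵥ x :=
  Finset.measurable_sum Finset.univ fun i _ => (by fun_prop)

lemma aux_meas_dot' (b : Fin d → ℝ) : Measurable fun x : Fin d → ℝ => x ⬝ᵥ b := by
  simpa [dotProduct_comm] using aux_meas_dot b

lemma aux_intXX (hX : Measurable X) (hAne : A.Nonempty) (hXA : ∀ ω, X ω ∈ A)
    {Q : Matrix (Fin d) (Fin d) ℝ} (hQ : ∀ i j, Q i j = ∫ ω, X ω i * X ω j)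
    (a b : Fin d → ℝ) :
    ∫ ω, (a ⬝ᵥ X ω) * (b ⬝ᵥ X ω) = a ⬝ᵥ (Q *ᵥ b) := by
  have hpt : ∀ ω, (a ⬝ᵥ X ω) * (b ⬝ᵥ X ω) = ∑ j, ∑ k, a j * b k * (X ω j * X ω k) := by
    intro ω
    rw [dotProduct, dotProduct, Finset.sum_mul_sum]
    exact Finset.sum_congr rfl fun j _ => Finset.sum_congr rfl fun k _ => by ring
  have hterm : ∀ j k, Integrable (fun ω => a j * b k * (X ω j * X ω k)) ℙ :=
    fun j k => ((aux_int_phi hX hAne hXA (fun x => x j * x k)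
      ((measurable_pi_apply j).mul (measurable_pi_apply k))).const_mul _)
  calc ∫ ω, (a ⬝ᵥ X ω) * (b ⬝ᵥ X ω)
      = ∫ ω, ∑ j, ∑ k, a j * b k * (X ω j * X ω k) := by simp_rw [hpt]
    _ = ∑ j, ∫ ω, ∑ k, a j * b k * (X ω j * X ω k) :=
        integral_finset_sum _ (fun j _ => integrable_finset_sum _ (fun k _ => hterm j k))
    _ = ∑ j, ∑ k, ∫ ω, a j * b k * (X ω j * X ω k) :=
        Finset.sum_congr rfl fun j _ => integral_finset_sum _ (fun k _ => hterm j k)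
    _ = ∑ j, ∑ k, a j * b k * Q j k := by
        refine Finset.sum_congr rfl fun j _ => Finset.sum_congr rfl fun k _ => ?_
        rw [integral_const_mul, hQ j k]
    _ = a ⬝ᵥ (Q *ᵥ b) := by
        rw [dotProduct]
        refine Finset.sum_congr rfl fun j _ => ?_
        rw [mulVec, dotProduct, Finset.mul_sum]
        exact Finset.sum_congr rfl fun k _ => by ring

end Aux2

/-- The one-sample estimator `θ̃ = θ₀ + Q⁻¹ X (y − ⟨X, θ₀⟩)` is unbiased and its covariance
is dominated (in the Loewner order) by `(R₀² + σ²) Q⁻¹`. -/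
theorem stmt13
    {Ω : Type*} [MeasureSpace Ω] [IsProbabilityMeasure (ℙ : Measure Ω)]
    (d : ℕ) (X : Ω → Fin d → ℝ) (η : Ω → ℝ)
    (hX : Measurable X) (hη : Measurable η)
    (A : Finset (Fin d → ℝ)) (hAne : A.Nonempty) (hXA : ∀ ω, X ω ∈ A)
    (θstar θ0 : Fin d → ℝ) (σ : ℝ)
    (Q : Matrix (Fin d) (Fin d) ℝ)
    (hQ : ∀ i j, Q i j = ∫ ω, X ω i * X ω j)
    (hQinv : IsUnit Q.det)
    (hη2 : MemLp η 2 ℙ)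
    (hcond0 : MeasureTheory.condExp (MeasurableSpace.comap X inferInstance) ℙ η =ᵐ[ℙ] 0)
    (hcondvar : ∀ᵐ ω ∂ℙ,
      MeasureTheory.condExp (MeasurableSpace.comap X inferInstance) ℙ (fun ω' => η ω' ^ 2) ω ≤ σ ^ 2)
    (y : Ω → ℝ) (hy : ∀ ω, y ω = X ω ⬝ᵥ θstar + η ω)
    (θt : Ω → Fin d → ℝ)
    (hθt : ∀ ω i, θt ω i = θ0 i + (Q⁻¹ *ᵥ X ω) i * (y ω - X ω ⬝ᵥ θ0))
    (R0 : ℝ) (hR0 : R0 = A.sup' hAne fun a => |a ⬝ᵥ (θstar - θ0)|) :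
    (∀ i, ∫ ω, θt ω i = θstar i) ∧
    Matrix.PosSemidef ((R0 ^ 2 + σ ^ 2) • Q⁻¹ -
      Matrix.of fun i j => ∫ ω, (θt ω i - θstar i) * (θt ω j - θstar j)) := by
  -- notation
  set Δ : Fin d → ℝ := θstar - θ0 with hΔdef
  have hΔi : ∀ i, Δ i = θstar i - θ0 i := fun i => rfl
  -- symmetry facts
  have hQT : Qᵀ = Q := by
    ext i j
    rw [Matrix.transpose_apply, hQ, hQ]
    simp_rw [mul_comm]
  have hQinvT : Q⁻¹ᵀ = Q⁻¹ := by rw [Matrix.transpose_nonsing_inv, hQT]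
  have hQQinv : Q * Q⁻¹ = 1 := Matrix.mul_nonsing_inv Q hQinv
  have hQinvQ : Q⁻¹ * Q = 1 := Matrix.nonsing_inv_mul Q hQinv
  have hkey : ∀ v w : Fin d → ℝ, v ⬝ᵥ (Q⁻¹ *ᵥ w) = (Q⁻¹ *ᵥ v) ⬝ᵥ w := by
    intro v w
    rw [Matrix.dotProduct_mulVec, ← Matrix.mulVec_transpose, hQinvT]
  -- the bound on the signal term
  have hfb : ∀ ω, |X ω ⬝ᵥ Δ| ≤ R0 := by
    intro ω
    rw [hR0]
    exact Finset.le_sup' (fun a => |a ⬝ᵥ (θstar - θ0)|) (hXA ω)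
  have hR0nn : 0 ≤ R0 := by
    obtain ⟨a, ha⟩ := hAne
    rw [hR0]
    exact le_trans (abs_nonneg _) (Finset.le_sup' (fun a => |a ⬝ᵥ (θstar - θ0)|) ha)
  -- pointwise decomposition of θt − θ*
  have hdiff : ∀ ω i, θt ω i - θstar i =
      ((Q⁻¹ *ᵥ X ω) i * (X ω ⬝ᵥ Δ) - Δ i) + (Q⁻¹ *ᵥ X ω) i * η ω := by
    intro ω i
    have hsub : X ω ⬝ᵥ Δ = X ω ⬝ᵥ θstar - X ω ⬝ᵥ θ0 := by
      rw [hΔdef, dotProduct_sub]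
    rw [hθt, hy, hΔi]
    rw [show X ω ⬝ᵥ θstar + η ω - X ω ⬝ᵥ θ0
        = (X ω ⬝ᵥ θstar - X ω ⬝ᵥ θ0) + η ω by ring, ← hsub]
    ring
  -- measurability of the building blocks
  have hψm : ∀ i, Measurable fun x : Fin d → ℝ => (Q⁻¹ *ᵥ x) i := fun i =>
    aux_meas_dot (Q⁻¹ i)
  have hφAm : ∀ i, Measurable fun x : Fin d → ℝ => (Q⁻¹ *ᵥ x) i * (x ⬝ᵥ Δ) - Δ i :=
    fun i => ((hψm i).mul (aux_meas_dot' Δ)).sub_const _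
  -- Part 1: unbiasedness
  have hmean : ∀ i, ∫ ω, θt ω i = θstar i := by
    intro i
    have hpt : ∀ ω, θt ω i = θstar i +
        (((Q⁻¹ *ᵥ X ω) i * (X ω ⬝ᵥ Δ) - Δ i) + (Q⁻¹ *ᵥ X ω) i * η ω) := by
      intro ω
      have := hdiff ω i
      linarith
    have hint1 : Integrable (fun ω => (Q⁻¹ *ᵥ X ω) i * (X ω ⬝ᵥ Δ) - Δ i) ℙ :=
      aux_int_phi hX hAne hXA _ (hφAm i)
    have hint2 : Integrable (fun ω => (Q⁻¹ *ᵥ X ω) i * η ω) ℙ :=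
      aux_int_phi_eta hX hAne hXA hη2 _ (hψm i)
    have hprod : ∀ ω, (Q⁻¹ *ᵥ X ω) i * (X ω ⬝ᵥ Δ) = (Q⁻¹ i ⬝ᵥ X ω) * (Δ ⬝ᵥ X ω) := by
      intro ω
      rw [dotProduct_comm (X ω) Δ]
      rfl
    have hI1 : ∫ ω, ((Q⁻¹ *ᵥ X ω) i * (X ω ⬝ᵥ Δ) - Δ i) = 0 := by
      have hintp : Integrable (fun ω => (Q⁻¹ *ᵥ X ω) i * (X ω ⬝ᵥ Δ)) ℙ :=
        aux_int_phi hX hAne hXA (fun x => (Q⁻¹ *ᵥ x) i * (x ⬝ᵥ Δ))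
          ((hψm i).mul (aux_meas_dot' Δ))
      rw [integral_sub hintp (integrable_const _)]
      simp_rw [hprod]
      rw [aux_intXX hX hAne hXA hQ (Q⁻¹ i) Δ, integral_const]
      have h1 : Q⁻¹ i ⬝ᵥ (Q *ᵥ Δ) = (Q⁻¹ *ᵥ (Q *ᵥ Δ)) i := rfl
      rw [h1, Matrix.mulVec_mulVec, hQinvQ, Matrix.one_mulVec]
      simp
    have hI2 : ∫ ω, (Q⁻¹ *ᵥ X ω) i * η ω = 0 :=
      aux_int_mul_eta_eq_zero hX hAne hXA hη2 hcond0 _ (hψm i)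
    simp_rw [hpt]
    rw [integral_add (f := fun _ => θstar i)
      (g := fun ω => ((Q⁻¹ *ᵥ X ω) i * (X ω ⬝ᵥ Δ) - Δ i) + (Q⁻¹ *ᵥ X ω) i * η ω)
      (integrable_const _) (hint1.add hint2), integral_const,
      integral_add hint1 hint2, hI1, hI2]
    simp
  refine ⟨hmean, ?_⟩
  -- Part 2
  set C : Matrix (Fin d) (Fin d) ℝ :=
    Matrix.of (fun i j => ∫ ω, (θt ω i - θstar i) * (θt ω j - θstar j)) with hCdef
  have hCapp : ∀ i j, C i j = ∫ ω, (θt ω i - θstar i) * (θt ω j - θstar j) := fun i j => rfl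
  have hCsymm : ∀ i j, C i j = C j i := by
    intro i j
    rw [hCapp, hCapp]
    simp_rw [mul_comm]
  -- integrability machinery
  have haff : ∀ (φ ψ : (Fin d → ℝ) → ℝ), Measurable φ → Measurable ψ →
      Integrable (fun ω => φ (X ω) + ψ (X ω) * η ω) ℙ := fun φ ψ hφ hψ =>
    (aux_int_phi hX hAne hXA φ hφ).add (aux_int_phi_eta hX hAne hXA hη2 ψ hψ)
  have hprodint : ∀ (φ₁ ψ₁ φ₂ ψ₂ : (Fin d → ℝ) → ℝ), Measurable φ₁ → Measurable ψ₁ →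
      Measurable φ₂ → Measurable ψ₂ →
      Integrable (fun ω => (φ₁ (X ω) + ψ₁ (X ω) * η ω) * (φ₂ (X ω) + ψ₂ (X ω) * η ω)) ℙ := by
    intro φ₁ ψ₁ φ₂ ψ₂ h1 h2 h3 h4
    have hrw : (fun ω => (φ₁ (X ω) + ψ₁ (X ω) * η ω) * (φ₂ (X ω) + ψ₂ (X ω) * η ω))
        = fun ω => ((fun x => φ₁ x * φ₂ x) (X ω)
          + (fun x => φ₁ x * ψ₂ x + ψ₁ x * φ₂ x) (X ω) * η ω)
          + (fun x => ψ₁ x * ψ₂ x) (X ω) * η ω ^ 2 := by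
      funext ω; ring
    rw [hrw]
    exact (haff _ _ (h1.mul h3) ((h1.mul h4).add (h2.mul h3))).add
      (aux_int_phi_etasq hX hAne hXA hη2 _ (h2.mul h4))
  have hhint : ∀ i j, Integrable (fun ω => (θt ω i - θstar i) * (θt ω j - θstar j)) ℙ := by
    intro i j
    have h := hprodint _ _ _ _ (hφAm i) (hψm i) (hφAm j) (hψm j)
    have hrw : (fun ω => (θt ω i - θstar i) * (θt ω j - θstar j))
        = fun ω => ((fun x => (Q⁻¹ *ᵥ x) i * (x ⬝ᵥ Δ) - Δ i) (X ω)
            + (fun x => (Q⁻¹ *ᵥ x) i) (X ω) * η ω)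
          * ((fun x => (Q⁻¹ *ᵥ x) j * (x ⬝ᵥ Δ) - Δ j) (X ω)
            + (fun x => (Q⁻¹ *ᵥ x) j) (X ω) * η ω) := by
      funext ω
      rw [hdiff ω i, hdiff ω j]
    rw [hrw]
    exact h
  rw [Matrix.posSemidef_iff_dotProduct_mulVec]
  constructor
  · -- Hermitian
    show ((R0 ^ 2 + σ ^ 2) • Q⁻¹ - C)ᴴ = _
    have h1 : ((R0 ^ 2 + σ ^ 2) • Q⁻¹ - C)ᴴ = ((R0 ^ 2 + σ ^ 2) • Q⁻¹ - C)ᵀ := by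
      ext i j
      simp [Matrix.conjTranspose_apply]
    rw [h1, Matrix.transpose_sub, Matrix.transpose_smul, hQinvT]
    congr 1
    ext i j
    rw [Matrix.transpose_apply]
    exact hCsymm j i
  · -- quadratic form
    intro v
    set u : Fin d → ℝ := Q⁻¹ *ᵥ v with hudef
    set c : ℝ := v ⬝ᵥ Δ with hcdef
    set K : ℝ := v ⬝ᵥ (Q⁻¹ *ᵥ v) with hKdef
    set W : Ω → ℝ := fun ω => ((u ⬝ᵥ X ω) * (X ω ⬝ᵥ Δ) - c) + (u ⬝ᵥ X ω) * η ω with hWdef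
    have hφam : Measurable fun x : Fin d → ℝ => (u ⬝ᵥ x) * (x ⬝ᵥ Δ) - c :=
      ((aux_meas_dot u).mul (aux_meas_dot' Δ)).sub_const _
    have hφbm : Measurable fun x : Fin d → ℝ => u ⬝ᵥ x := aux_meas_dot u
    -- W as the v-contraction of θt − θ*
    have hWh : ∀ ω, ∑ i, v i * (θt ω i - θstar i) = W ω := by
      intro ω
      have hv : v ⬝ᵥ (Q⁻¹ *ᵥ X ω) = u ⬝ᵥ X ω := hkey v (X ω)
      rw [hWdef]
      show _ = ((u ⬝ᵥ X ω) * (X ω ⬝ᵥ Δ) - c) + (u ⬝ᵥ X ω) * η ω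
      rw [← hv, hcdef]
      show ∑ i, v i * (θt ω i - θstar i)
          = ((∑ i, v i * (Q⁻¹ *ᵥ X ω) i) * (X ω ⬝ᵥ Δ) - ∑ i, v i * Δ i)
            + (∑ i, v i * (Q⁻¹ *ᵥ X ω) i) * η ω
      rw [Finset.sum_mul, Finset.sum_mul, ← Finset.sum_sub_distrib, ← Finset.sum_add_distrib]
      refine Finset.sum_congr rfl fun i _ => ?_
      rw [hdiff ω i]
      ring
    -- integrability of products with W
    have hhWint : ∀ i, Integrable (fun ω => (θt ω i - θstar i) * W ω) ℙ := by
      intro i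
      have h := hprodint _ _ _ _ (hφAm i) (hψm i) hφam hφbm
      have hrw : (fun ω => (θt ω i - θstar i) * W ω)
          = fun ω => ((fun x => (Q⁻¹ *ᵥ x) i * (x ⬝ᵥ Δ) - Δ i) (X ω)
              + (fun x => (Q⁻¹ *ᵥ x) i) (X ω) * η ω)
            * ((fun x => (u ⬝ᵥ x) * (x ⬝ᵥ Δ) - c) (X ω)
              + (fun x => u ⬝ᵥ x) (X ω) * η ω) := by
        funext ω
        rw [hdiff ω i, hWdef]
      rw [hrw]
      exact h
    -- the quadratic form of C is ∫ W²
    have hCv : v ⬝ᵥ (C *ᵥ v) = ∫ ω, W ω * W ω := by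
      have hrow : ∀ i, ∑ j, C i j * v j = ∫ ω, (θt ω i - θstar i) * W ω := by
        intro i
        have h1 : ∀ j, C i j * v j = ∫ ω, (θt ω i - θstar i) * (θt ω j - θstar j) * v j := by
          intro j
          rw [hCapp, ← integral_mul_const]
        simp_rw [h1]
        rw [← integral_finset_sum _ (fun j _ => (hhint i j).mul_const _)]
        congr 1
        funext ω
        rw [← hWh ω, Finset.mul_sum]
        exact Finset.sum_congr rfl fun j _ => by ring
      have h2 : v ⬝ᵥ (C *ᵥ v) = ∑ i, v i * ∫ ω, (θt ω i - θstar i) * W ω := by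
        rw [dotProduct]
        exact Finset.sum_congr rfl fun i _ => by rw [mulVec, dotProduct, hrow i]
      rw [h2]
      have h3 : ∀ i, v i * ∫ ω, (θt ω i - θstar i) * W ω
          = ∫ ω, v i * ((θt ω i - θstar i) * W ω) := fun i => (integral_const_mul _ _).symm
      simp_rw [h3]
      rw [← integral_finset_sum _ (fun i _ => (hhWint i).const_mul _)]
      congr 1
      funext ω
      rw [show W ω * W ω = (∑ i, v i * (θt ω i - θstar i)) * W ω by rw [hWh ω],
        Finset.sum_mul]
      exact Finset.sum_congr rfl fun i _ => by ring
    -- split ∫ W²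
    have hWsq : ∫ ω, W ω * W ω
        = (∫ ω, ((u ⬝ᵥ X ω) * (X ω ⬝ᵥ Δ) - c) ^ 2)
          + ∫ ω, (u ⬝ᵥ X ω) ^ 2 * η ω ^ 2 := by
      have hrw : (fun ω => W ω * W ω)
          = fun ω => (((u ⬝ᵥ X ω) * (X ω ⬝ᵥ Δ) - c) ^ 2
              + 2 * (((u ⬝ᵥ X ω) * (X ω ⬝ᵥ Δ) - c) * (u ⬝ᵥ X ω)) * η ω)
            + (u ⬝ᵥ X ω) ^ 2 * η ω ^ 2 := by
        funext ω
        rw [hWdef]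
        ring
      rw [hrw]
      have i1 : Integrable (fun ω => ((u ⬝ᵥ X ω) * (X ω ⬝ᵥ Δ) - c) ^ 2) ℙ :=
        aux_int_phi hX hAne hXA _ (hφam.pow_const 2)
      have i2 : Integrable
          (fun ω => 2 * (((u ⬝ᵥ X ω) * (X ω ⬝ᵥ Δ) - c) * (u ⬝ᵥ X ω)) * η ω) ℙ :=
        aux_int_phi_eta hX hAne hXA hη2 _ ((hφam.mul hφbm).const_mul 2)
      have i3 : Integrable (fun ω => (u ⬝ᵥ X ω) ^ 2 * η ω ^ 2) ℙ :=
        aux_int_phi_etasq hX hAne hXA hη2 _ (hφbm.pow_const 2)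
      rw [integral_add
        (f := fun ω => ((u ⬝ᵥ X ω) * (X ω ⬝ᵥ Δ) - c) ^ 2
          + 2 * (((u ⬝ᵥ X ω) * (X ω ⬝ᵥ Δ) - c) * (u ⬝ᵥ X ω)) * η ω)
        (g := fun ω => (u ⬝ᵥ X ω) ^ 2 * η ω ^ 2) (i1.add i2) i3,
        integral_add (f := fun ω => ((u ⬝ᵥ X ω) * (X ω ⬝ᵥ Δ) - c) ^ 2)
        (g := fun ω => 2 * (((u ⬝ᵥ X ω) * (X ω ⬝ᵥ Δ) - c) * (u ⬝ᵥ X ω)) * η ω) i1 i2,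
        aux_int_mul_eta_eq_zero hX hAne hXA hη2 hcond0 (fun x => 2 * (((u ⬝ᵥ x) * (x ⬝ᵥ Δ) - c) * (u ⬝ᵥ x))) ((hφam.mul hφbm).const_mul 2),
        add_zero]
    -- key integrals
    have hgg : ∫ ω, (u ⬝ᵥ X ω) ^ 2 = K := by
      have h1 : (fun ω => (u ⬝ᵥ X ω) ^ 2) = fun ω => (u ⬝ᵥ X ω) * (u ⬝ᵥ X ω) := by
        funext ω; ring
      rw [h1, aux_intXX hX hAne hXA hQ u u, hudef, ← hkey, Matrix.mulVec_mulVec, hQinvQ,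
        Matrix.one_mulVec, hKdef]
    have hgf : ∫ ω, (u ⬝ᵥ X ω) * (X ω ⬝ᵥ Δ) = c := by
      have h1 : (fun ω => (u ⬝ᵥ X ω) * (X ω ⬝ᵥ Δ)) = fun ω => (u ⬝ᵥ X ω) * (Δ ⬝ᵥ X ω) := by
        funext ω; rw [dotProduct_comm (X ω) Δ]
      rw [h1, aux_intXX hX hAne hXA hQ u Δ, hudef, ← hkey, Matrix.mulVec_mulVec, hQinvQ,
        Matrix.one_mulVec, hcdef]
    -- bound the signal part
    have hsig : ∫ ω, ((u ⬝ᵥ X ω) * (X ω ⬝ᵥ Δ) - c) ^ 2 ≤ R0 ^ 2 * K - c ^ 2 := by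
      have igf : Integrable (fun ω => (u ⬝ᵥ X ω) * (X ω ⬝ᵥ Δ)) ℙ :=
        aux_int_phi hX hAne hXA _ (hφbm.mul (aux_meas_dot' Δ))
      have igf2 : Integrable (fun ω => ((u ⬝ᵥ X ω) * (X ω ⬝ᵥ Δ)) ^ 2) ℙ :=
        aux_int_phi hX hAne hXA _ ((hφbm.mul (aux_meas_dot' Δ)).pow_const 2)
      have hsplit : ∫ ω, ((u ⬝ᵥ X ω) * (X ω ⬝ᵥ Δ) - c) ^ 2
          = (∫ ω, ((u ⬝ᵥ X ω) * (X ω ⬝ᵥ Δ)) ^ 2) - c ^ 2 := by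
        have hrw : (fun ω => ((u ⬝ᵥ X ω) * (X ω ⬝ᵥ Δ) - c) ^ 2)
            = fun ω => (((u ⬝ᵥ X ω) * (X ω ⬝ᵥ Δ)) ^ 2
                - (2 * c) * ((u ⬝ᵥ X ω) * (X ω ⬝ᵥ Δ))) + c ^ 2 := by
          funext ω; ring
        rw [hrw, integral_add
          (f := fun ω => ((u ⬝ᵥ X ω) * (X ω ⬝ᵥ Δ)) ^ 2 - (2 * c) * ((u ⬝ᵥ X ω) * (X ω ⬝ᵥ Δ)))
          (g := fun _ => c ^ 2) (igf2.sub (igf.const_mul (2 * c))) (integrable_const _),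
          integral_sub (f := fun ω => ((u ⬝ᵥ X ω) * (X ω ⬝ᵥ Δ)) ^ 2)
          (g := fun ω => (2 * c) * ((u ⬝ᵥ X ω) * (X ω ⬝ᵥ Δ))) igf2 (igf.const_mul (2 * c)),
          integral_const, integral_const_mul, hgf]
        simp
        ring
      rw [hsplit]
      have hmono : ∫ ω, ((u ⬝ᵥ X ω) * (X ω ⬝ᵥ Δ)) ^ 2 ≤ R0 ^ 2 * K := by
        rw [← hgg, ← integral_const_mul]
        refine integral_mono igf2 ((aux_int_phi hX hAne hXA _ (hφbm.pow_const 2)).const_mul _) ?_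
        intro ω
        have h1 : (X ω ⬝ᵥ Δ) ^ 2 ≤ R0 ^ 2 := by
          have := hfb ω
          nlinarith [abs_nonneg (X ω ⬝ᵥ Δ), sq_abs (X ω ⬝ᵥ Δ)]
        have h2 : (0:ℝ) ≤ (u ⬝ᵥ X ω) ^ 2 := sq_nonneg _
        calc ((u ⬝ᵥ X ω) * (X ω ⬝ᵥ Δ)) ^ 2 = (u ⬝ᵥ X ω) ^ 2 * (X ω ⬝ᵥ Δ) ^ 2 := by ring
          _ ≤ (u ⬝ᵥ X ω) ^ 2 * R0 ^ 2 := mul_le_mul_of_nonneg_left h1 h2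
          _ = R0 ^ 2 * (u ⬝ᵥ X ω) ^ 2 := mul_comm _ _
      linarith
    -- bound the noise part
    have hnoise : ∫ ω, (u ⬝ᵥ X ω) ^ 2 * η ω ^ 2 ≤ σ ^ 2 * K := by
      have := aux_int_sq_etasq_le hX hAne hXA hη2 hcondvar (fun x => u ⬝ᵥ x) hφbm
      rw [hgg] at this
      exact this
    -- final assembly
    have hWbound : ∫ ω, W ω * W ω ≤ (R0 ^ 2 + σ ^ 2) * K := by
      rw [hWsq]
      nlinarith [sq_nonneg c]
    have hexpand : star v ⬝ᵥ (((R0 ^ 2 + σ ^ 2) • Q⁻¹ - C) *ᵥ v)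
        = (R0 ^ 2 + σ ^ 2) * K - v ⬝ᵥ (C *ᵥ v) := by
      rw [star_trivial, Matrix.sub_mulVec, dotProduct_sub, Matrix.smul_mulVec,
        dotProduct_smul, smul_eq_mul, hKdef]
    rw [hexpand, hCv]
    linarith
end

section
/- With the one-sample estimator θ̃ = θ₀ + Q^{-1}X(y − ⟨X, θ₀⟩) as above, for each coordinate i, Var(θ̃_i) ≤ (R₀² + σ²)·(Q^{-1})_{ii}. -/
open Matrix MeasureTheory ProbabilityTheory

/-- The one-sample estimator `θ̃ = θ₀ + Q⁻¹ X (y − ⟨X, θ₀⟩)` satisfies the per-coordinate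
variance bound `Var(θ̃ᵢ) ≤ (R₀² + σ²)(Q⁻¹)_{ii}`. -/
theorem stmt14
    {Ω : Type*} [MeasureSpace Ω] [IsProbabilityMeasure (ℙ : Measure Ω)]
    (d : ℕ) (X : Ω → Fin d → ℝ) (η : Ω → ℝ)
    (hX : Measurable X) (hη : Measurable η)
    (A : Finset (Fin d → ℝ)) (hAne : A.Nonempty) (hXA : ∀ ω, X ω ∈ A)
    (θstar θ0 : Fin d → ℝ) (σ : ℝ)
    (Q : Matrix (Fin d) (Fin d) ℝ)
    (hQ : ∀ i j, Q i j = ∫ ω, X ω i * X ω j)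
    (hQinv : IsUnit Q.det)
    (hη2 : MemLp η 2 ℙ)
    (hcond0 : MeasureTheory.condExp (MeasurableSpace.comap X inferInstance) ℙ η =ᵐ[ℙ] 0)
    (hcondvar : ∀ᵐ ω ∂ℙ,
      MeasureTheory.condExp (MeasurableSpace.comap X inferInstance) ℙ (fun ω' => η ω' ^ 2) ω ≤ σ ^ 2)
    (y : Ω → ℝ) (hy : ∀ ω, y ω = X ω ⬝ᵥ θstar + η ω)
    (θt : Ω → Fin d → ℝ)
    (hθt : ∀ ω i, θt ω i = θ0 i + (Q⁻¹ *ᵥ X ω) i * (y ω - X ω ⬝ᵥ θ0))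
    (R0 : ℝ) (hR0 : R0 = A.sup' hAne fun a => |a ⬝ᵥ (θstar - θ0)|) :
    ∀ i, ∫ ω, (θt ω i - θstar i) ^ 2 ≤ (R0 ^ 2 + σ ^ 2) * Q⁻¹ i i := by
  intro i
  set m := MeasurableSpace.comap X inferInstance with hm_def
  have hm : m ≤ (MeasureSpace.toMeasurableSpace : MeasurableSpace Ω) := by
    rw [hm_def]; exact hX.comap_le
  have hXm : Measurable[m] X := Measurable.of_comap_le le_rfl
  set Δ : Fin d → ℝ := θstar - θ0 with hΔdef
  set c : Fin d → ℝ := fun j => Q⁻¹ i j with hcdef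
  -- boundedness / integrability of functions of X
  have hbddX : ∀ ψ : (Fin d → ℝ) → ℝ, ∃ C, ∀ ω, ‖ψ (X ω)‖ ≤ C := fun ψ =>
    ⟨A.sup' hAne fun a => |ψ a|, fun ω => by
      rw [Real.norm_eq_abs]; exact Finset.le_sup' (fun a => |ψ a|) (hXA ω)⟩
  have hintX : ∀ ψ : (Fin d → ℝ) → ℝ, Measurable ψ → Integrable (fun ω => ψ (X ω)) ℙ := by
    intro ψ hψ
    obtain ⟨C, hC⟩ := hbddX ψ
    exact Integrable.mono' (integrable_const C) ((hψ.comp hX).aestronglyMeasurable)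
      (ae_of_all _ hC)
  have hmdotl : ∀ v : Fin d → ℝ, Measurable fun x : Fin d → ℝ => v ⬝ᵥ x := by
    intro v
    unfold dotProduct
    exact Finset.measurable_sum _ fun j _ => ((measurable_pi_apply j).const_mul _)
  have hmdotr : ∀ v : Fin d → ℝ, Measurable fun x : Fin d → ℝ => x ⬝ᵥ v := by
    intro v
    unfold dotProduct
    exact Finset.measurable_sum _ fun j _ => ((measurable_pi_apply j).mul_const _)
  -- the key second-moment computation
  have hdotQ : ∀ v w : Fin d → ℝ,
      ∫ ω, (v ⬝ᵥ X ω) * (X ω ⬝ᵥ w) = ∑ j, ∑ k, v j * w k * Q j k := by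
    intro v w
    have hpt : ∀ ω, (v ⬝ᵥ X ω) * (X ω ⬝ᵥ w)
        = ∑ j, ∑ k, v j * w k * (X ω j * X ω k) := by
      intro ω
      simp only [dotProduct, Finset.sum_mul_sum]
      exact Finset.sum_congr rfl fun j _ => Finset.sum_congr rfl fun k _ => by ring
    have hint2 : ∀ (j k : Fin d), Integrable (fun ω => v j * w k * (X ω j * X ω k)) ℙ :=
      fun j k => hintX (fun x => v j * w k * (x j * x k))
        (((measurable_pi_apply j).mul (measurable_pi_apply k)).const_mul _)
    simp only [hpt]
    rw [integral_finset_sum _ (fun j _ => integrable_finset_sum _ fun k _ => hint2 j k)]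
    refine Finset.sum_congr rfl fun j _ => ?_
    rw [integral_finset_sum _ (fun k _ => hint2 j k)]
    refine Finset.sum_congr rfl fun k _ => ?_
    rw [integral_const_mul, hQ]
  have halg : ∀ w : Fin d → ℝ, ∑ j, ∑ k, c j * w k * Q j k = w i := by
    intro w
    have h1 : ∑ j, ∑ k, c j * w k * Q j k = ∑ k, (∑ j, c j * Q j k) * w k := by
      rw [Finset.sum_comm]
      refine Finset.sum_congr rfl fun k _ => ?_
      rw [Finset.sum_mul]
      exact Finset.sum_congr rfl fun j _ => by ring
    have h2 : ∀ k, ∑ j, c j * Q j k = (1 : Matrix (Fin d) (Fin d) ℝ) i k := by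
      intro k
      rw [← Matrix.nonsing_inv_mul Q hQinv, Matrix.mul_apply]
    rw [h1]
    simp only [h2, Matrix.one_apply]
    simp
  have hIg2 : ∫ ω, (c ⬝ᵥ X ω) ^ 2 = Q⁻¹ i i := by
    have h : ∀ ω, (c ⬝ᵥ X ω) ^ 2 = (c ⬝ᵥ X ω) * (X ω ⬝ᵥ c) := by
      intro ω; rw [dotProduct_comm (X ω) c]; ring
    simp only [h]
    rw [hdotQ]
    exact halg c
  have hIgu : ∫ ω, (c ⬝ᵥ X ω) * (X ω ⬝ᵥ Δ) = Δ i := by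
    rw [hdotQ]; exact halg Δ
  -- pointwise decomposition
  have hpt : ∀ ω, (θt ω i - θstar i) ^ 2 =
      ((c ⬝ᵥ X ω) * (X ω ⬝ᵥ Δ) - Δ i) ^ 2
      + 2 * ((((c ⬝ᵥ X ω) * (X ω ⬝ᵥ Δ) - Δ i) * (c ⬝ᵥ X ω)) * η ω)
      + (c ⬝ᵥ X ω) ^ 2 * η ω ^ 2 := by
    intro ω
    have hgc : (Q⁻¹ *ᵥ X ω) i = c ⬝ᵥ X ω := rfl
    have hΔd : X ω ⬝ᵥ Δ = X ω ⬝ᵥ θstar - X ω ⬝ᵥ θ0 := by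
      rw [hΔdef, dotProduct_sub]
    have hΔi : Δ i = θstar i - θ0 i := rfl
    rw [hθt, hy, hgc, hΔd, hΔi]
    ring
  -- integrability of the three pieces
  have hψ1 : Measurable fun x : Fin d → ℝ => ((c ⬝ᵥ x) * (x ⬝ᵥ Δ) - Δ i) ^ 2 :=
    (((hmdotl c).mul (hmdotr Δ)).sub measurable_const).pow_const 2
  have hA1int : Integrable (fun ω => ((c ⬝ᵥ X ω) * (X ω ⬝ᵥ Δ) - Δ i) ^ 2) ℙ := hintX _ hψ1
  have hψw : Measurable fun x : Fin d → ℝ => ((c ⬝ᵥ x) * (x ⬝ᵥ Δ) - Δ i) * (c ⬝ᵥ x) :=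
    (((hmdotl c).mul (hmdotr Δ)).sub measurable_const).mul (hmdotl c)
  have hηint : Integrable η ℙ := hη2.integrable one_le_two
  have hA2int : Integrable
      (fun ω => (((c ⬝ᵥ X ω) * (X ω ⬝ᵥ Δ) - Δ i) * (c ⬝ᵥ X ω)) * η ω) ℙ := by
    obtain ⟨C, hC⟩ := hbddX fun x => ((c ⬝ᵥ x) * (x ⬝ᵥ Δ) - Δ i) * (c ⬝ᵥ x)
    exact hηint.bdd_mul ((hψw.comp hX).aestronglyMeasurable) (ae_of_all _ hC)
  have hψv : Measurable fun x : Fin d → ℝ => (c ⬝ᵥ x) ^ 2 := (hmdotl c).pow_const 2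
  have hA3int : Integrable (fun ω => (c ⬝ᵥ X ω) ^ 2 * η ω ^ 2) ℙ := by
    obtain ⟨C, hC⟩ := hbddX fun x => (c ⬝ᵥ x) ^ 2
    exact hη2.integrable_sq.bdd_mul ((hψv.comp hX).aestronglyMeasurable) (ae_of_all _ hC)
  -- cross term vanishes
  have hI2 : ∫ ω, (((c ⬝ᵥ X ω) * (X ω ⬝ᵥ Δ) - Δ i) * (c ⬝ᵥ X ω)) * η ω = 0 := by
    set w : Ω → ℝ := fun ω => ((c ⬝ᵥ X ω) * (X ω ⬝ᵥ Δ) - Δ i) * (c ⬝ᵥ X ω) with hwdef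
    have hw_sm : StronglyMeasurable[m] w := (hψw.comp hXm).stronglyMeasurable
    have hwη : Integrable (w * η) ℙ := hA2int
    have hpull := condExp_mul_of_stronglyMeasurable_left hw_sm hwη hηint
    have h0 : w * (condExp m ℙ η) =ᵐ[ℙ] 0 := by
      filter_upwards [hcond0] with ω hω
      simp [Pi.mul_apply, hω]
    calc ∫ ω, w ω * η ω = ∫ ω, (condExp m ℙ (w * η)) ω := (integral_condExp (μ := ℙ) (f := w * η) hm).symm
      _ = ∫ ω, (w * (condExp m ℙ η)) ω := integral_congr_ae hpull
      _ = ∫ ω, (0 : Ω → ℝ) ω := integral_congr_ae h0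
      _ = 0 := by simp
  -- noise term bound
  have hI3 : ∫ ω, (c ⬝ᵥ X ω) ^ 2 * η ω ^ 2 ≤ σ ^ 2 * Q⁻¹ i i := by
    set v : Ω → ℝ := fun ω => (c ⬝ᵥ X ω) ^ 2 with hvdef
    have hv_sm : StronglyMeasurable[m] v := (hψv.comp hXm).stronglyMeasurable
    have hvη : Integrable (v * fun ω => η ω ^ 2) ℙ := hA3int
    have hpull := condExp_mul_of_stronglyMeasurable_left hv_sm hvη hη2.integrable_sq
    have hint1 : Integrable (v * (condExp m ℙ fun ω => η ω ^ 2)) ℙ :=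
      integrable_condExp.congr hpull
    have hint2 : Integrable (fun ω => v ω * σ ^ 2) ℙ :=
      hintX (fun x => (c ⬝ᵥ x) ^ 2 * σ ^ 2) (hψv.mul_const _)
    calc ∫ ω, v ω * η ω ^ 2 = ∫ ω, (condExp m ℙ (v * fun ω => η ω ^ 2)) ω :=
          (integral_condExp (μ := ℙ) (f := v * fun ω => η ω ^ 2) hm).symm
      _ = ∫ ω, (v * (condExp m ℙ fun ω => η ω ^ 2)) ω := integral_congr_ae hpull
      _ ≤ ∫ ω, v ω * σ ^ 2 := by
          refine integral_mono_ae hint1 hint2 ?_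
          filter_upwards [hcondvar] with ω hω
          exact mul_le_mul_of_nonneg_left hω (sq_nonneg _)
      _ = (∫ ω, v ω) * σ ^ 2 := integral_mul_const _ _
      _ = σ ^ 2 * Q⁻¹ i i := by rw [hvdef, hIg2]; ring
  -- bias term bound
  have hI1 : ∫ ω, ((c ⬝ᵥ X ω) * (X ω ⬝ᵥ Δ) - Δ i) ^ 2 ≤ R0 ^ 2 * Q⁻¹ i i := by
    have hptsq : ∀ ω, ((c ⬝ᵥ X ω) * (X ω ⬝ᵥ Δ) - Δ i) ^ 2
        = (c ⬝ᵥ X ω) ^ 2 * (X ω ⬝ᵥ Δ) ^ 2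
          - (2 * Δ i) * ((c ⬝ᵥ X ω) * (X ω ⬝ᵥ Δ)) + Δ i ^ 2 := by
      intro ω; ring
    have hintA : Integrable (fun ω => (c ⬝ᵥ X ω) ^ 2 * (X ω ⬝ᵥ Δ) ^ 2) ℙ :=
      hintX (fun x => (c ⬝ᵥ x) ^ 2 * (x ⬝ᵥ Δ) ^ 2)
        (hψv.mul ((hmdotr Δ).pow_const 2))
    have hintB : Integrable (fun ω => (2 * Δ i) * ((c ⬝ᵥ X ω) * (X ω ⬝ᵥ Δ))) ℙ :=
      hintX (fun x => (2 * Δ i) * ((c ⬝ᵥ x) * (x ⬝ᵥ Δ)))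
        (((hmdotl c).mul (hmdotr Δ)).const_mul _)
    have heq : ∫ ω, ((c ⬝ᵥ X ω) * (X ω ⬝ᵥ Δ) - Δ i) ^ 2
        = (∫ ω, (c ⬝ᵥ X ω) ^ 2 * (X ω ⬝ᵥ Δ) ^ 2) - Δ i ^ 2 := by
      simp only [hptsq]
      have hAB : Integrable (fun ω =>
          (c ⬝ᵥ X ω) ^ 2 * (X ω ⬝ᵥ Δ) ^ 2 - 2 * Δ i * (c ⬝ᵥ X ω * X ω ⬝ᵥ Δ)) ℙ :=
        hintA.sub hintB
      rw [integral_add hAB (integrable_const _),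
        integral_sub hintA hintB, integral_const_mul, hIgu, integral_const]
      simp only [measure_univ, probReal_univ, ENNReal.toReal_one, smul_eq_mul, one_mul]
      ring
    have hmono : ∫ ω, (c ⬝ᵥ X ω) ^ 2 * (X ω ⬝ᵥ Δ) ^ 2 ≤ ∫ ω, (c ⬝ᵥ X ω) ^ 2 * R0 ^ 2 := by
      refine integral_mono hintA
        (hintX (fun x => (c ⬝ᵥ x) ^ 2 * R0 ^ 2) (hψv.mul_const _)) fun ω => ?_
      have habs : |X ω ⬝ᵥ Δ| ≤ R0 := by
        rw [hR0]
        exact Finset.le_sup' (fun a => |a ⬝ᵥ Δ|) (hXA ω)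
      have h1 : (X ω ⬝ᵥ Δ) ^ 2 ≤ R0 ^ 2 := by
        have := abs_le.mp habs
        exact sq_le_sq' (by linarith [this.1]) this.2
      exact mul_le_mul_of_nonneg_left h1 (sq_nonneg _)
    have hIR : ∫ ω, (c ⬝ᵥ X ω) ^ 2 * R0 ^ 2 = R0 ^ 2 * Q⁻¹ i i := by
      rw [integral_mul_const, hIg2]; ring
    have hsq : (0:ℝ) ≤ Δ i ^ 2 := sq_nonneg _
    linarith [heq, hmono, hIR]
  -- put everything together
  have hsplit : ∫ ω, (θt ω i - θstar i) ^ 2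
      = (∫ ω, ((c ⬝ᵥ X ω) * (X ω ⬝ᵥ Δ) - Δ i) ^ 2)
        + 2 * (∫ ω, (((c ⬝ᵥ X ω) * (X ω ⬝ᵥ Δ) - Δ i) * (c ⬝ᵥ X ω)) * η ω)
        + ∫ ω, (c ⬝ᵥ X ω) ^ 2 * η ω ^ 2 := by
    simp only [hpt]
    have h2' : Integrable
        (fun ω => 2 * ((c ⬝ᵥ X ω * X ω ⬝ᵥ Δ - Δ i) * (c ⬝ᵥ X ω) * η ω)) ℙ :=
      hA2int.const_mul 2
    have h12 : Integrable (fun ω => (c ⬝ᵥ X ω * X ω ⬝ᵥ Δ - Δ i) ^ 2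
        + 2 * ((c ⬝ᵥ X ω * X ω ⬝ᵥ Δ - Δ i) * (c ⬝ᵥ X ω) * η ω)) ℙ :=
      hA1int.add h2'
    rw [integral_add h12 hA3int, integral_add hA1int h2', integral_const_mul]
  rw [hsplit, hI2]
  have : (R0 ^ 2 + σ ^ 2) * Q⁻¹ i i = R0 ^ 2 * Q⁻¹ i i + σ ^ 2 * Q⁻¹ i i := by ring
  rw [this]
  linarith [hI1, hI3]
end
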